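/- Let u = [a₁,a₂]×[b₁,b₂] and v = [c₁,c₂]×[d₁,d₂] be horizontally adjacent axis-aligned rectangles with u above v (b₁ = d₂), with a₁ < c₁ and a₂ = c₂, and let p = (px,py) be a point in the interior of u. Fix g₁, g₂ with d₁ < g₁ < g₂ < d₂. Then there exists X ≥ c₂ such that for every x ≥ X, if u and v are stretched to u' = [a₁,x]×[b₁,b₂] and v' = [c₁,x]×[d₁,d₂] (so that their common segment becomes [c₁,x]×{d₂}), the gate {x}×[g₁,g₂] of v' is contained in the visibility region vis(p, v'), i.e. for every t ∈ [g₁,g₂] the open segment from p to (x,t) meets the relative interior of [c₁,x]×{d₂}. -/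

import Mathlib

open Set

/-- The visibility region of a point `p` inside a rectangle `v` whose common segment
with the rectangle containing `p` has relative interior `relS`: the points `w ∈ v`
such that the open segment from `p` to `w` meets `relS`. -/
def visRegion (p : ℝ × ℝ) (v relS : Set (ℝ × ℝ)) : Set (ℝ × ℝ) :=
  {w | w ∈ v ∧ (openSegment ℝ p w ∩ relS).Nonempty}

/-- two horizontally adjacent rectangles `u = [a₁,a₂]×[b₁,b₂]` (above) and
`v = [c₁,c₂]×[d₁,d₂]` (below) with `b₁ = d₂`, `a₁ < c₁`, `a₂ = c₂`, a point `p`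
in the interior of `u`, and a gate height interval `[g₁,g₂]` with `d₁ < g₁ < g₂ < d₂`.
After a sufficiently large common stretch of the right sides of `u` and `v`, the gate
of the stretched `v` is contained in the visibility region of `p` inside stretched `v`. -/
theorem gate_in_vis_of_horizontal_adjacency_after_stretch
    (a₁ a₂ b₁ b₂ c₁ c₂ d₁ d₂ g₁ g₂ : ℝ) (p : ℝ × ℝ)
    (ha : a₁ < a₂) (hb : b₁ < b₂) (hc : c₁ < c₂) (hd : d₁ < d₂)
    (hbot : b₁ = d₂) (ha₁c₁ : a₁ < c₁) (ha₂c₂ : a₂ = c₂)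
    (hp : p ∈ interior (Icc a₁ a₂ ×ˢ Icc b₁ b₂))
    (hg₁ : d₁ < g₁) (hg : g₁ < g₂) (hg₂ : g₂ < d₂) :
    ∃ X : ℝ, c₂ ≤ X ∧ ∀ x : ℝ, X ≤ x →
      ({x} : Set ℝ) ×ˢ Icc g₁ g₂ ⊆
        visRegion p (Icc c₁ x ×ˢ Icc d₁ d₂) (Ioo c₁ x ×ˢ ({d₂} : Set ℝ)) := by
  rw [interior_prod_eq, interior_Icc, interior_Icc] at hp
  obtain ⟨⟨hpx1, hpx2⟩, hpy1, hpy2⟩ := hp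
  set px := p.1 with hpx
  set py := p.2 with hpy
  have hpyd : d₂ < py := by rw [hbot] at hpy1; exact hpy1
  have hεd : (0:ℝ) < py - g₁ := by linarith
  set ε := (py - d₂) / (py - g₁) with hεdef
  have hε0 : 0 < ε := div_pos (by linarith) hεd
  refine ⟨max c₂ (max (px + 1) (px + (c₁ - px) / ε + 1)), le_max_left _ _, ?_⟩
  intro x hx w hw
  rw [mem_prod, mem_singleton_iff, mem_Icc] at hw
  obtain ⟨hw1, ht1, ht2⟩ := hw
  have hxc₂ : c₂ ≤ x := le_trans (le_max_left _ _) hx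
  have hxpx : px + 1 ≤ x := le_trans (le_trans (le_max_left _ _) (le_max_right _ _)) hx
  have hxε : px + (c₁ - px) / ε + 1 ≤ x :=
    le_trans (le_trans (le_max_right _ _) (le_max_right _ _)) hx
  set t := w.2 with htdef
  have htd : py - t > 0 := by linarith
  set s := (py - d₂) / (py - t) with hsdef
  have hs0 : 0 < s := div_pos (by linarith) htd
  have hs1 : s < 1 := by
    rw [hsdef, div_lt_one htd]; linarith
  have hseq : s * (py - t) = py - d₂ := div_mul_cancel₀ _ (ne_of_gt htd)
  have hsε : ε ≤ s := by
    rw [hεdef, hsdef]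
    apply div_le_div_of_nonneg_left (by linarith) htd (by linarith)
  -- crossing point
  have hxpx' : px < x := by linarith
  have hz1lt : (1 - s) * px + s * x < x := by nlinarith
  have hz1gt : c₁ < (1 - s) * px + s * x := by
    have h1 : ε * (x - px) ≥ ε * ((c₁ - px) / ε + 1) :=
      mul_le_mul_of_nonneg_left (by linarith) (le_of_lt hε0)
    have h2 : ε * ((c₁ - px) / ε + 1) = c₁ - px + ε := by
      field_simp
    have h3 : s * (x - px) ≥ ε * (x - px) :=
      mul_le_mul_of_nonneg_right hsε (by linarith)
    nlinarith
  refine ⟨⟨?_, ?_⟩, ((1 - s) * px + s * x, d₂), ?_, ?_⟩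
  · rw [mem_Icc, hw1]; constructor <;> linarith
  · rw [mem_Icc]; constructor <;> linarith
  · refine ⟨1 - s, s, by linarith, hs0, by ring, ?_⟩
    refine Prod.ext ?_ ?_
    · simp only [Prod.fst_add, Prod.smul_fst, smul_eq_mul, hw1]; rfl
    · simp only [Prod.snd_add, Prod.smul_snd, smul_eq_mul]
      show (1 - s) * py + s * t = d₂
      linear_combination -hseq
  · exact ⟨⟨hz1gt, hz1lt⟩, rfl⟩
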